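/- For every natural number t, every k-linear map f : U_t^{⊗n} → U_t^{⊗m} that commutes with the diagonal action of S_t (i.e., f(σ·v) = σ·f(v) for all σ ∈ S_t and v ∈ U_t^{⊗n}) is a k-linear combination of the operators T_π, where π ranges over the set partitions of Fin m ⊕ Fin n. (Fullness of Deligne's functor ψ_t, part of Theorem 4.1.) -/

import Mathlib

open scoped Classical

noncomputable section

/-- The partition operator `T_π : U_t^{⊗n} → U_t^{⊗m}` attached to a set partition `π` of
`Fin m ⊕ Fin n` (encoded as an equivalence relation, i.e. a `Setoid`). -/
def partitionMap (k : Type*) [Field k] (t m n : ℕ) (π : Setoid (Fin m ⊕ Fin n)) :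
    ((Fin n → Fin t) → k) →ₗ[k] ((Fin m → Fin t) → k) :=
  Matrix.mulVecLin (Matrix.of fun (J : Fin m → Fin t) (I : Fin n → Fin t) =>
    if ∀ x y : Fin m ⊕ Fin n, π.r x y → Sum.elim J I x = Sum.elim J I y then (1 : k) else 0)

/-- The diagonal action of `σ ∈ S_t` on `U_t^{⊗n}`:  `σ · u_I = u_{σ ∘ I}`. -/
def diagAct (k : Type*) [Field k] (t n : ℕ) (σ : Equiv.Perm (Fin t)) :
    ((Fin n → Fin t) → k) →ₗ[k] ((Fin n → Fin t) → k) :=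
  Matrix.mulVecLin (Matrix.of fun (J I : Fin n → Fin t) =>
    if (fun p => σ (I p)) = J then (1 : k) else 0)

/-- Two functions with the same kernel differ by a permutation of the codomain. -/
lemma exists_perm_comp_aux {α β : Type*} [Fintype β] (K K' : α → β)
    (h : Setoid.ker K = Setoid.ker K') : ∃ σ : Equiv.Perm β, ∀ a, σ (K a) = K' a := by
  have hcast : ∀ (s s' : Setoid α) (hs : s = s') (a : α),
      cast (congrArg Quotient hs) (Quotient.mk s a) = Quotient.mk s' a := by
    rintro s s' rfl a; rfl
  let e : {x // x ∈ Set.range K} ≃ {x // x ∈ Set.range K'} :=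
    (Setoid.quotientKerEquivRange K).symm.trans
      ((Equiv.cast (congrArg Quotient h)).trans (Setoid.quotientKerEquivRange K'))
  refine ⟨e.extendSubtype, fun a => ?_⟩
  rw [e.extendSubtype_apply_of_mem (K a) (Set.mem_range_self a)]
  have h1 : (Setoid.quotientKerEquivRange K).symm ⟨K a, Set.mem_range_self a⟩
      = Quotient.mk (Setoid.ker K) a := by
    apply (Setoid.quotientKerEquivRange K).injective
    simp only [Equiv.apply_symm_apply]
    rfl
  have h2 : (e ⟨K a, Set.mem_range_self a⟩ : β) = K' a := by
    show ((Setoid.quotientKerEquivRange K') ((Equiv.cast (congrArg Quotient h))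
      ((Setoid.quotientKerEquivRange K).symm ⟨K a, Set.mem_range_self a⟩)) : β) = K' a
    rw [h1, Equiv.cast_apply, hcast _ _ h a]
    rfl
  rw [h2]

lemma diagAct_single (k : Type*) [Field k] (t n : ℕ) (σ : Equiv.Perm (Fin t))
    (I : Fin n → Fin t) :
    diagAct k t n σ (Pi.single I 1) = Pi.single (fun p => σ (I p)) 1 := by
  funext J
  simp [diagAct, Matrix.mulVec_single, Pi.single_apply, eq_comm]

lemma diagAct_apply (k : Type*) [Field k] (t n : ℕ) (σ : Equiv.Perm (Fin t))
    (w : (Fin n → Fin t) → k) (J : Fin n → Fin t) :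
    diagAct k t n σ w J = w (fun p => σ.symm (J p)) := by
  simp only [diagAct, Matrix.mulVecLin_apply, Matrix.mulVec, dotProduct, Matrix.of_apply]
  rw [Finset.sum_congr rfl (g := fun J' => if J' = (fun p => σ.symm (J p)) then w J' else 0)
    (fun J' _ => ?_), Finset.sum_ite_eq' Finset.univ _ w]
  · simp
  · have : ((fun p => σ (J' p)) = J) ↔ (J' = fun p => σ.symm (J p)) := by
      constructor
      · rintro rfl; funext p; simp
      · rintro rfl; funext p; simp
    simp only [this]
    split <;> simp_all

/-- Fullness of Deligne's functor `ψ_t`: every `k`-linear map `U_t^{⊗n} → U_t^{⊗m}` commuting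
with the diagonal `S_t`-action is a `k`-linear combination of the operators `T_π`. -/
theorem stmt3 (k : Type*) [Field k] [CharZero k] (t m n : ℕ)
    (f : ((Fin n → Fin t) → k) →ₗ[k] ((Fin m → Fin t) → k))
    (hf : ∀ (σ : Equiv.Perm (Fin t)) (v : (Fin n → Fin t) → k),
      f (diagAct k t n σ v) = diagAct k t m σ (f v)) :
    f ∈ Submodule.span k
        (Set.range fun π : Setoid (Fin m ⊕ Fin n) => partitionMap k t m n π) := by
  classical
  haveI : Finite (Setoid (Fin m ⊕ Fin n)) :=
    Finite.of_injective (fun s : Setoid (Fin m ⊕ Fin n) => s.r)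
      (fun a b h => Setoid.ext fun x y => iff_of_eq (congrFun (congrFun h x) y))
  haveI : Fintype (Setoid (Fin m ⊕ Fin n)) := Fintype.ofFinite _
  -- the "exact kernel" matrices
  set A : Setoid (Fin m ⊕ Fin n) → Matrix (Fin m → Fin t) (Fin n → Fin t) k :=
    fun π => Matrix.of fun J I => if Setoid.ker (Sum.elim J I) = π then (1 : k) else 0 with hA
  -- each exact-kernel operator lies in the span, by downward induction
  have Espan : ∀ π : Setoid (Fin m ⊕ Fin n), Matrix.toLin' (A π) ∈ Submodule.span k
      (Set.range fun π : Setoid (Fin m ⊕ Fin n) => partitionMap k t m n π) := by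
    have wf : WellFounded ((· > ·) : Setoid (Fin m ⊕ Fin n) → Setoid (Fin m ⊕ Fin n) → Prop) :=
      wellFounded_gt
    refine fun π => wf.induction
      (C := fun π => Matrix.toLin' (A π) ∈ Submodule.span k
        (Set.range fun π : Setoid (Fin m ⊕ Fin n) => partitionMap k t m n π)) π fun π IH => ?_
    have hmat : (Matrix.of fun (J : Fin m → Fin t) (I : Fin n → Fin t) =>
        if ∀ x y : Fin m ⊕ Fin n, π.r x y → Sum.elim J I x = Sum.elim J I y then (1 : k) else 0)
        = A π + ∑ π' ∈ Finset.univ.filter (π < ·), A π' := by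
      ext J I
      have hcond : (∀ x y : Fin m ⊕ Fin n, π.r x y → Sum.elim J I x = Sum.elim J I y)
          ↔ π ≤ Setoid.ker (Sum.elim J I) := Iff.rfl
      have hsplit : Finset.univ.filter (π ≤ ·) =
          insert π (Finset.univ.filter ((π < ·) : Setoid (Fin m ⊕ Fin n) → Prop)) := by
        ext π'
        simp [le_iff_lt_or_eq, eq_comm, or_comm]
      have hsum : (if π ≤ Setoid.ker (Sum.elim J I) then (1 : k) else 0)
          = ∑ π' ∈ Finset.univ.filter (π ≤ ·),
              (if Setoid.ker (Sum.elim J I) = π' then (1 : k) else 0) := by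
        rw [Finset.sum_ite_eq (Finset.univ.filter (π ≤ ·)) (Setoid.ker (Sum.elim J I))
          (fun _ => (1 : k))]
        simp [le_antisymm_iff, and_comm]
      simp only [Matrix.add_apply, Matrix.sum_apply, Matrix.of_apply, hcond, hsum, hsplit]
      rw [Finset.sum_insert (by simp)]
      rfl
    have hE : Matrix.toLin' (A π) = partitionMap k t m n π
        - ∑ π' ∈ Finset.univ.filter (π < ·), Matrix.toLin' (A π') := by
      have h2 := congrArg Matrix.toLin' hmat
      rw [map_add, map_sum] at h2
      have h3 : partitionMap k t m n π = Matrix.toLin' (A π)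
          + ∑ π' ∈ Finset.univ.filter (π < ·), Matrix.toLin' (A π') := h2
      rw [h3]; abel
    show Matrix.toLin' (A π) ∈ Submodule.span k
      (Set.range fun π : Setoid (Fin m ⊕ Fin n) => partitionMap k t m n π)
    rw [hE]
    refine sub_mem (Submodule.subset_span ⟨π, rfl⟩) (Submodule.sum_mem _ fun π' hπ' => ?_)
    exact IH π' (Finset.mem_filter.mp hπ').2
  -- the matrix of f
  set M : Matrix (Fin m → Fin t) (Fin n → Fin t) k := LinearMap.toMatrix' f with hMdef
  have hM : ∀ (J : Fin m → Fin t) (I : Fin n → Fin t), M J I = f (Pi.single I 1) J := by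
    intro J I
    rw [hMdef, LinearMap.toMatrix'_apply]
  -- invariance of M
  have hinv : ∀ (σ : Equiv.Perm (Fin t)) (J : Fin m → Fin t) (I : Fin n → Fin t),
      M (fun p => σ (J p)) (fun p => σ (I p)) = M J I := by
    intro σ J I
    have h1 := hf σ (Pi.single I 1)
    rw [diagAct_single] at h1
    have h2 := congrFun h1 (fun p => σ (J p))
    rw [diagAct_apply] at h2
    have h3 : (fun p => σ.symm (σ (J p))) = J := by funext p; simp
    rw [h3] at h2
    rw [hM, hM, h2]
  -- M J I depends only on the kernel of Sum.elim J I
  have hconst : ∀ (J J' : Fin m → Fin t) (I I' : Fin n → Fin t),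
      Setoid.ker (Sum.elim J I) = Setoid.ker (Sum.elim J' I') → M J I = M J' I' := by
    intro J J' I I' h
    obtain ⟨σ, hσ⟩ := exists_perm_comp_aux (Sum.elim J I) (Sum.elim J' I') h
    have hJ : (fun p => σ (J p)) = J' := funext fun p => hσ (Sum.inl p)
    have hI : (fun p => σ (I p)) = I' := funext fun p => hσ (Sum.inr p)
    rw [← hJ, ← hI, hinv σ J I]
  set c : Setoid (Fin m ⊕ Fin n) → k := fun π =>
    if h : ∃ p : (Fin m → Fin t) × (Fin n → Fin t), Setoid.ker (Sum.elim p.1 p.2) = π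
    then M h.choose.1 h.choose.2 else 0 with hc
  have hMc : ∀ (J : Fin m → Fin t) (I : Fin n → Fin t),
      M J I = c (Setoid.ker (Sum.elim J I)) := by
    intro J I
    have hex : ∃ p : (Fin m → Fin t) × (Fin n → Fin t),
        Setoid.ker (Sum.elim p.1 p.2) = Setoid.ker (Sum.elim J I) := ⟨(J, I), rfl⟩
    rw [hc]
    simp only [dif_pos hex]
    exact (hconst _ _ _ _ hex.choose_spec).symm
  have hMsum : M = ∑ π : Setoid (Fin m ⊕ Fin n), c π • A π := by
    ext J I
    simp only [Matrix.sum_apply, Matrix.smul_apply, hA, Matrix.of_apply, smul_eq_mul,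
      mul_ite, mul_one, mul_zero, Finset.sum_ite_eq, Finset.mem_univ, if_true]
    exact hMc J I
  have hfM : f = Matrix.toLin' M := (Matrix.toLin'_toMatrix' f).symm
  rw [hfM, hMsum, map_sum]
  refine Submodule.sum_mem _ fun π _ => ?_
  rw [map_smul]
  exact Submodule.smul_mem _ _ (Espan π)
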